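/- Let v₀ = (a₀,b₀,c₀), v₁ = (a₁,b₁,c₁), v₃ = (a₃,b₃,c₃) be ℝ-linearly independent primitive vectors in ℤ≥0³. Set Ψ = a₁b₃ − a₃b₁, μ_A = a₀b₃ − a₃b₀, μ_B = a₁b₀ − a₀b₁, and assume Ψ, μ_A, μ_B > 0, that μ_A = #(ℤ³ ∩ ◊(v₀,v₃)) and μ_B = #(ℤ³ ∩ ◊(v₀,v₁)), and that the determinant of the matrix with rows v₀, v₁, v₃ equals #(ℤ³ ∩ ◊(v₀,v₁,v₃)) = μ_A·μ_B·f_AB for a positive integer f_AB. Let μ₂ = #(ℤ³ ∩ ◊(v₁,v₃)). Then μ₂ = gcd(μ_A f_AB, μ_B f_AB, Ψ) = gcd(μ_A f_AB, Ψ) = gcd(μ_B f_AB, Ψ). -/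

import Mathlib

noncomputable section

/-- The coercion of an integer vector in `ℤ³` to `ℝ³`. -/
def coe3 (v : Fin 3 → ℤ) : Fin 3 → ℝ := fun i => (v i : ℝ)

/-- A vector of `ℤ³` is primitive if the greatest common divisor of its components is 1. -/
def IsPrimitive (v : Fin 3 → ℤ) : Prop := Int.gcd (v 0) (Int.gcd (v 1) (v 2)) = 1

/-- The fundamental parallelepiped spanned by two vectors:
`◊(a,b) = {s•a + t•b : s,t ∈ [0,1)}`. -/
def para2 (a b : Fin 3 → ℝ) : Set (Fin 3 → ℝ) :=
  {x | ∃ s t : ℝ, 0 ≤ s ∧ s < 1 ∧ 0 ≤ t ∧ t < 1 ∧ x = s • a + t • b}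

/-- The fundamental parallelepiped spanned by three vectors:
`◊(a,b,c) = {s•a + t•b + u•c : s,t,u ∈ [0,1)}`. -/
def para3 (a b c : Fin 3 → ℝ) : Set (Fin 3 → ℝ) :=
  {x | ∃ s t u : ℝ, 0 ≤ s ∧ s < 1 ∧ 0 ≤ t ∧ t < 1 ∧ 0 ≤ u ∧ u < 1 ∧
    x = s • a + t • b + u • c}

/-- The integral points `ℤ³ ∩ ◊(a,b)` of a two-dimensional fundamental parallelepiped. -/
def H2pts (a b : Fin 3 → ℤ) : Set (Fin 3 → ℤ) := {x | coe3 x ∈ para2 (coe3 a) (coe3 b)}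

/-- The integral points `ℤ³ ∩ ◊(a,b,c)` of a three-dimensional fundamental parallelepiped. -/
def H3pts (a b c : Fin 3 → ℤ) : Set (Fin 3 → ℤ) :=
  {x | coe3 x ∈ para3 (coe3 a) (coe3 b) (coe3 c)}

/-- Let `v₀, v₁, v₃` be ℝ-linearly independent primitive vectors in `ℤ≥0³`
with `Ψ = a₁b₃ − a₃b₁ > 0`, `μ_A = a₀b₃ − a₃b₀ > 0`, `μ_B = a₁b₀ − a₀b₁ > 0`; assume
`μ_A = #(ℤ³ ∩ ◊(v₀,v₃))`, `μ_B = #(ℤ³ ∩ ◊(v₀,v₁))` and that the determinant of the matrix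
with rows `v₀, v₁, v₃` equals `#(ℤ³ ∩ ◊(v₀,v₁,v₃)) = μ_A·μ_B·f_AB` for a positive integer
`f_AB`.  Then `μ₂ = #(ℤ³ ∩ ◊(v₁,v₃))` satisfies
`μ₂ = gcd(μ_A f_AB, μ_B f_AB, Ψ) = gcd(μ_A f_AB, Ψ) = gcd(μ_B f_AB, Ψ)`. -/
lemma bezout3 (x y z : ℤ) :
    ∃ a b c : ℤ, a * x + b * y + c * z = Int.gcd x (Int.gcd y z) := by
  refine ⟨Int.gcdA x (Int.gcd y z),
    Int.gcdA y z * Int.gcdB x (Int.gcd y z),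
    Int.gcdB y z * Int.gcdB x (Int.gcd y z), ?_⟩
  have h1 := Int.gcd_eq_gcd_ab x (Int.gcd y z)
  have h2 := Int.gcd_eq_gcd_ab y z
  rw [h1, h2]; ring

lemma dvd_of_dvd_three (g q x y z : ℤ) (hxyz : Int.gcd x (Int.gcd y z) = 1)
    (hx : g ∣ q * x) (hy : g ∣ q * y) (hz : g ∣ q * z) : g ∣ q := by
  obtain ⟨a, b, c, habc⟩ := bezout3 x y z
  rw [hxyz] at habc
  have hq : q = a * (q * x) + b * (q * y) + c * (q * z) := by
    push_cast at habc
    linear_combination (-q) * habc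
  rw [hq]
  exact dvd_add (dvd_add (hx.mul_left a) (hy.mul_left b)) (hz.mul_left c)

lemma count_H2 (u w : Fin 3 → ℤ) (n1 n2 n3 : ℤ)
    (h1 : n1 = u 1 * w 2 - u 2 * w 1) (h2 : n2 = u 2 * w 0 - u 0 * w 2)
    (h3 : n3 = u 0 * w 1 - u 1 * w 0)
    (hu : Int.gcd (u 0) (Int.gcd (u 1) (u 2)) = 1)
    (hne : n3 ≠ 0) :
    (H2pts u w).ncard = Int.gcd n1 (Int.gcd n2 n3) := by
  set g : ℕ := Int.gcd n1 (Int.gcd n2 n3) with hgdef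
  have hgpos : 0 < g := by
    rcases Nat.eq_zero_or_pos g with h | h
    · exfalso
      obtain ⟨-, h'⟩ := Int.gcd_eq_zero_iff.mp h
      have h'' : Int.gcd n2 n3 = 0 := by exact_mod_cast h'
      exact hne (Int.gcd_eq_zero_iff.mp h'').2
    · exact h
  have gz : ((g : ℤ)) ≠ 0 := by exact_mod_cast hgpos.ne'
  have gr : (0 : ℤ) < (g : ℤ) := by exact_mod_cast hgpos
  have hd1 : (g : ℤ) ∣ n1 := by rw [hgdef]; exact (Int.gcd_dvd_left _ _)
  have hd23 : (g : ℤ) ∣ (Int.gcd n2 n3 : ℤ) := by rw [hgdef]; exact (Int.gcd_dvd_right _ _)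
  have hd2 : (g : ℤ) ∣ n2 := hd23.trans (Int.gcd_dvd_left _ _)
  have hd3 : (g : ℤ) ∣ n3 := hd23.trans (Int.gcd_dvd_right _ _)
  obtain ⟨c1, c2, c3, hc⟩ := bezout3 n1 n2 n3
  rw [← hgdef] at hc
  obtain ⟨d0, d1, d2, hdu⟩ := bezout3 (u 0) (u 1) (u 2)
  rw [hu] at hdu
  push_cast at hdu
  set lam : ℤ := d0 * w 0 + d1 * w 1 + d2 * w 2 with hlam
  have hkey : ∀ l : Fin 3, (g : ℤ) ∣ w l - lam * u l := by
    intro l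
    fin_cases l
    · have e : w 0 - lam * u 0 = d2 * n2 + (-d1) * n3 := by
        rw [hlam, h2, h3]; linear_combination (-(w 0)) * hdu
      rw [show ((⟨0, by norm_num⟩ : Fin 3)) = (0 : Fin 3) from rfl, e]
      exact dvd_add (hd2.mul_left _) (hd3.mul_left _)
    · have e : w 1 - lam * u 1 = d0 * n3 + (-d2) * n1 := by
        rw [hlam, h3, h1]; linear_combination (-(w 1)) * hdu
      rw [show ((⟨1, by norm_num⟩ : Fin 3)) = (1 : Fin 3) from rfl, e]
      exact dvd_add (hd3.mul_left _) (hd1.mul_left _)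
    · have e : w 2 - lam * u 2 = d1 * n1 + (-d0) * n2 := by
        rw [hlam, h1, h2]; linear_combination (-(w 2)) * hdu
      rw [show ((⟨2, by norm_num⟩ : Fin 3)) = (2 : Fin 3) from rfl, e]
      exact dvd_add (hd1.mul_left _) (hd2.mul_left _)
  have hmodu : ∀ j : ℤ, (∀ l : Fin 3, (g : ℤ) ∣ j * u l) → (g : ℤ) ∣ j := by
    intro j hj
    exact dvd_of_dvd_three _ _ _ _ _ hu (hj 0) (hj 1) (hj 2)
  set jj : ℤ → ℤ := fun k => (-k * lam) % (g : ℤ) with hjjdef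
  have hjj0 : ∀ k, 0 ≤ jj k := fun k => Int.emod_nonneg _ gz
  have hjjlt : ∀ k, jj k < (g : ℤ) := fun k => Int.emod_lt_of_pos _ gr
  have hjjcong : ∀ k : ℤ, (g : ℤ) ∣ jj k + k * lam := by
    intro k
    refine ⟨-((-k * lam) / (g : ℤ)), ?_⟩
    simp only [hjjdef]
    rw [Int.emod_def]
    ring
  have hdvdF : ∀ (k : ℤ) (l : Fin 3), (g : ℤ) ∣ jj k * u l + k * w l := by
    intro k l
    have e : jj k * u l + k * w l = (jj k + k * lam) * u l + k * (w l - lam * u l) := by ring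
    rw [e]
    exact dvd_add ((hjjcong k).mul_right _) ((hkey l).mul_left _)
  set F : ℤ → (Fin 3 → ℤ) := fun k l => (jj k * u l + k * w l) / (g : ℤ) with hFdef
  have hFval : ∀ (k : ℤ) (l : Fin 3), (g : ℤ) * F k l = jj k * u l + k * w l := by
    intro k l
    simp only [hFdef]
    exact Int.mul_ediv_cancel' (hdvdF k l)
  -- membership
  have hmem : ∀ k : ℤ, 0 ≤ k → k < (g : ℤ) → F k ∈ H2pts u w := by
    intro k hk0 hkg
    have hgR : (0 : ℝ) < (g : ℝ) := by exact_mod_cast hgpos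
    refine ⟨(jj k : ℝ) / (g : ℝ), (k : ℝ) / (g : ℝ), ?_, ?_, ?_, ?_, ?_⟩
    · exact div_nonneg (by exact_mod_cast hjj0 k) hgR.le
    · rw [div_lt_one hgR]; exact_mod_cast hjjlt k
    · exact div_nonneg (by exact_mod_cast hk0) hgR.le
    · rw [div_lt_one hgR]; exact_mod_cast hkg
    · funext l
      have hcR : (g : ℝ) * ((F k l : ℤ) : ℝ) = (jj k : ℝ) * ((u l : ℤ) : ℝ) + (k : ℝ) * ((w l : ℤ) : ℝ) := by
        exact_mod_cast hFval k l
      simp only [coe3, Pi.add_apply, Pi.smul_apply, smul_eq_mul]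
      field_simp
      linear_combination hcR
  -- surjectivity
  have hsurj : ∀ x ∈ H2pts u w, ∃ k : ℤ, 0 ≤ k ∧ k < (g : ℤ) ∧ F k = x := by
    rintro x ⟨s, t, hs0, hs1, ht0, ht1, hx⟩
    have hxl : ∀ l : Fin 3, ((x l : ℤ) : ℝ) = s * (u l : ℝ) + t * (w l : ℝ) := by
      intro l
      have := congrFun hx l
      simpa [coe3, smul_eq_mul] using this
    have hgR : (0 : ℝ) < (g : ℝ) := by exact_mod_cast hgpos
    have hT1 : t * ((n1 : ℤ) : ℝ) = ((u 1 : ℤ) : ℝ) * ((x 2 : ℤ) : ℝ) - ((u 2 : ℤ) : ℝ) * ((x 1 : ℤ) : ℝ) := by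
      push_cast [h1]
      linear_combination (-((u 1 : ℤ) : ℝ)) * hxl 2 + ((u 2 : ℤ) : ℝ) * hxl 1
    have hT2 : t * ((n2 : ℤ) : ℝ) = ((u 2 : ℤ) : ℝ) * ((x 0 : ℤ) : ℝ) - ((u 0 : ℤ) : ℝ) * ((x 2 : ℤ) : ℝ) := by
      push_cast [h2]
      linear_combination (-((u 2 : ℤ) : ℝ)) * hxl 0 + ((u 0 : ℤ) : ℝ) * hxl 2
    have hT3 : t * ((n3 : ℤ) : ℝ) = ((u 0 : ℤ) : ℝ) * ((x 1 : ℤ) : ℝ) - ((u 1 : ℤ) : ℝ) * ((x 0 : ℤ) : ℝ) := by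
      push_cast [h3]
      linear_combination (-((u 0 : ℤ) : ℝ)) * hxl 1 + ((u 1 : ℤ) : ℝ) * hxl 0
    have hS1 : s * ((n1 : ℤ) : ℝ) = ((x 1 : ℤ) : ℝ) * ((w 2 : ℤ) : ℝ) - ((x 2 : ℤ) : ℝ) * ((w 1 : ℤ) : ℝ) := by
      push_cast [h1]
      linear_combination (-((w 2 : ℤ) : ℝ)) * hxl 1 + ((w 1 : ℤ) : ℝ) * hxl 2
    have hS2 : s * ((n2 : ℤ) : ℝ) = ((x 2 : ℤ) : ℝ) * ((w 0 : ℤ) : ℝ) - ((x 0 : ℤ) : ℝ) * ((w 2 : ℤ) : ℝ) := by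
      push_cast [h2]
      linear_combination (-((w 0 : ℤ) : ℝ)) * hxl 2 + ((w 2 : ℤ) : ℝ) * hxl 0
    have hS3 : s * ((n3 : ℤ) : ℝ) = ((x 0 : ℤ) : ℝ) * ((w 1 : ℤ) : ℝ) - ((x 1 : ℤ) : ℝ) * ((w 0 : ℤ) : ℝ) := by
      push_cast [h3]
      linear_combination (-((w 1 : ℤ) : ℝ)) * hxl 0 + ((w 0 : ℤ) : ℝ) * hxl 1
    have hcR : (c1 : ℝ) * (n1 : ℝ) + (c2 : ℝ) * (n2 : ℝ) + (c3 : ℝ) * (n3 : ℝ) = (g : ℝ) := by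
      exact_mod_cast hc
    set k : ℤ := c1 * (u 1 * x 2 - u 2 * x 1) + c2 * (u 2 * x 0 - u 0 * x 2) + c3 * (u 0 * x 1 - u 1 * x 0) with hk
    set j : ℤ := c1 * (x 1 * w 2 - x 2 * w 1) + c2 * (x 2 * w 0 - x 0 * w 2) + c3 * (x 0 * w 1 - x 1 * w 0) with hj
    have htg : t * (g : ℝ) = (k : ℝ) := by
      rw [hk]; push_cast
      linear_combination (-t) * hcR + (c1 : ℝ) * hT1 + (c2 : ℝ) * hT2 + (c3 : ℝ) * hT3
    have hsg : s * (g : ℝ) = (j : ℝ) := by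
      rw [hj]; push_cast
      linear_combination (-s) * hcR + (c1 : ℝ) * hS1 + (c2 : ℝ) * hS2 + (c3 : ℝ) * hS3
    have hk0 : 0 ≤ k := by
      have : (0 : ℝ) ≤ (k : ℝ) := by rw [← htg]; exact mul_nonneg ht0 hgR.le
      exact_mod_cast this
    have hkg : k < (g : ℤ) := by
      have : (k : ℝ) < (g : ℝ) := by rw [← htg]; nlinarith
      exact_mod_cast this
    have hj0 : 0 ≤ j := by
      have : (0 : ℝ) ≤ (j : ℝ) := by rw [← hsg]; exact mul_nonneg hs0 hgR.le
      exact_mod_cast this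
    have hjg : j < (g : ℤ) := by
      have : (j : ℝ) < (g : ℝ) := by rw [← hsg]; nlinarith
      exact_mod_cast this
    have hxeq : ∀ l : Fin 3, (g : ℤ) * x l = j * u l + k * w l := by
      intro l
      have hr : (((g : ℤ) * x l : ℤ) : ℝ) = ((j * u l + k * w l : ℤ) : ℝ) := by
        push_cast
        linear_combination ((u l : ℤ) : ℝ) * hsg + ((w l : ℤ) : ℝ) * htg + (g : ℝ) * hxl l
      exact_mod_cast hr
    have hjk : (g : ℤ) ∣ j + k * lam := by
      apply hmodu
      intro l
      have e : (j + k * lam) * u l = (g : ℤ) * x l - k * (w l - lam * u l) := by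
        linear_combination (-1 : ℤ) * hxeq l
      rw [e]
      exact dvd_sub (Dvd.intro _ rfl) ((hkey l).mul_left k)
    have hjeq : j = jj k := by
      have h7 : (g : ℤ) ∣ j - (-k * lam) := by
        have e : j - (-k * lam) = j + k * lam := by ring
        rw [e]; exact hjk
      have h5 : (-k * lam) % (g : ℤ) = j % (g : ℤ) := Int.modEq_iff_dvd.mpr h7
      have h6 : j % (g : ℤ) = j := Int.emod_eq_of_lt hj0 hjg
      simp only [hjjdef]
      rw [← h6, ← h5]
    refine ⟨k, hk0, hkg, ?_⟩
    funext l
    have e2 : (g : ℤ) * F k l = (g : ℤ) * x l := by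
      rw [hFval k l, ← hjeq, hxeq l]
    exact mul_left_cancel₀ gz e2
  -- injectivity
  have hinj : ∀ k1 k2 : ℤ, F k1 = F k2 → k1 = k2 := by
    intro k1 k2 hF
    have hl : ∀ l : Fin 3, (jj k1 - jj k2) * u l = (k2 - k1) * w l := by
      intro l
      have e1' : jj k1 * u l + k1 * w l = jj k2 * u l + k2 * w l := by
        rw [← hFval k1 l, ← hFval k2 l, hF]
      linear_combination e1'
    have hzero : (k2 - k1) * n3 = 0 := by
      rw [h3]
      linear_combination (-(u 0)) * hl 1 + (u 1) * hl 0
    rcases mul_eq_zero.mp hzero with h | h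
    · omega
    · exact absurd h hne
  -- conclude
  have hset : H2pts u w = ↑((Finset.range g).image (fun k : ℕ => F (k : ℤ))) := by
    ext x
    simp only [Finset.coe_image, Finset.coe_range, Set.mem_image, Set.mem_Iio]
    constructor
    · intro hx
      obtain ⟨k, hk0, hkg, hFk⟩ := hsurj x hx
      refine ⟨k.toNat, by omega, ?_⟩
      rw [Int.toNat_of_nonneg hk0]
      exact hFk
    · rintro ⟨k, hk, rfl⟩
      exact hmem k (Int.natCast_nonneg k) (by exact_mod_cast hk)
  rw [hset, Set.ncard_coe_finset]
  rw [Finset.card_image_of_injOn, Finset.card_range]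
  intro k1 _ k2 _ hF12
  exact_mod_cast hinj k1 k2 hF12


theorem mu2_eq_gcds (a₀ b₀ c₀ a₁ b₁ c₁ a₃ b₃ c₃ : ℤ)
    (hnn₀ : 0 ≤ a₀ ∧ 0 ≤ b₀ ∧ 0 ≤ c₀) (hnn₁ : 0 ≤ a₁ ∧ 0 ≤ b₁ ∧ 0 ≤ c₁)
    (hnn₃ : 0 ≤ a₃ ∧ 0 ≤ b₃ ∧ 0 ≤ c₃)
    (hp₀ : IsPrimitive ![a₀, b₀, c₀]) (hp₁ : IsPrimitive ![a₁, b₁, c₁])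
    (hp₃ : IsPrimitive ![a₃, b₃, c₃])
    (hli : LinearIndependent ℝ
      ![coe3 ![a₀, b₀, c₀], coe3 ![a₁, b₁, c₁], coe3 ![a₃, b₃, c₃]])
    (hΨpos : 0 < a₁ * b₃ - a₃ * b₁) (hμApos : 0 < a₀ * b₃ - a₃ * b₀)
    (hμBpos : 0 < a₁ * b₀ - a₀ * b₁)
    (hμA : ((H2pts ![a₀, b₀, c₀] ![a₃, b₃, c₃]).ncard : ℤ) = a₀ * b₃ - a₃ * b₀)
    (hμB : ((H2pts ![a₀, b₀, c₀] ![a₁, b₁, c₁]).ncard : ℤ) = a₁ * b₀ - a₀ * b₁)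
    (fAB : ℕ) (hfABpos : 0 < fAB)
    (hdet : Matrix.det !![a₀, b₀, c₀; a₁, b₁, c₁; a₃, b₃, c₃] =
      ((H3pts ![a₀, b₀, c₀] ![a₁, b₁, c₁] ![a₃, b₃, c₃]).ncard : ℤ))
    (hcard : ((H3pts ![a₀, b₀, c₀] ![a₁, b₁, c₁] ![a₃, b₃, c₃]).ncard : ℤ) =
      (a₀ * b₃ - a₃ * b₀) * (a₁ * b₀ - a₀ * b₁) * (fAB : ℤ)) :
    (H2pts ![a₁, b₁, c₁] ![a₃, b₃, c₃]).ncard =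
        Int.gcd ((a₀ * b₃ - a₃ * b₀) * fAB)
          (Int.gcd ((a₁ * b₀ - a₀ * b₁) * fAB) (a₁ * b₃ - a₃ * b₁)) ∧
      (H2pts ![a₁, b₁, c₁] ![a₃, b₃, c₃]).ncard =
        Int.gcd ((a₀ * b₃ - a₃ * b₀) * fAB) (a₁ * b₃ - a₃ * b₁) ∧
      (H2pts ![a₁, b₁, c₁] ![a₃, b₃, c₃]).ncard =
        Int.gcd ((a₁ * b₀ - a₀ * b₁) * fAB) (a₁ * b₃ - a₃ * b₁) := by

  have hμBne : a₁ * b₀ - a₀ * b₁ ≠ 0 := hμBpos.ne'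
  have hμAne : a₀ * b₃ - a₃ * b₀ ≠ 0 := hμApos.ne'
  have hprim1 : Int.gcd a₁ (Int.gcd b₁ c₁) = 1 := hp₁
  have hprim3 : Int.gcd a₃ (Int.gcd b₃ c₃) = 1 := hp₃
  have hprim0 : Int.gcd a₀ (Int.gcd b₀ c₀) = 1 := hp₀
  -- the three parallelogram counts
  have hμ2 : (H2pts ![a₁, b₁, c₁] ![a₃, b₃, c₃]).ncard
      = Int.gcd (b₁*c₃ - b₃*c₁) (Int.gcd (c₁*a₃ - c₃*a₁) (a₁*b₃ - a₃*b₁)) := by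
    apply count_H2 _ _ _ _ _ (by show b₁*c₃ - b₃*c₁ = b₁*c₃ - c₁*b₃; ring)
      (by show c₁*a₃ - c₃*a₁ = c₁*a₃ - a₁*c₃; ring)
      (by show a₁*b₃ - a₃*b₁ = a₁*b₃ - b₁*a₃; ring) hprim1 hΨpos.ne'
  have hA : (H2pts ![a₀, b₀, c₀] ![a₃, b₃, c₃]).ncard
      = Int.gcd (b₀*c₃ - b₃*c₀) (Int.gcd (c₀*a₃ - c₃*a₀) (a₀*b₃ - a₃*b₀)) := by
    apply count_H2 _ _ _ _ _ (by show b₀*c₃ - b₃*c₀ = b₀*c₃ - c₀*b₃; ring)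
      (by show c₀*a₃ - c₃*a₀ = c₀*a₃ - a₀*c₃; ring)
      (by show a₀*b₃ - a₃*b₀ = a₀*b₃ - b₀*a₃; ring) hprim0 hμApos.ne'
  have hB : (H2pts ![a₀, b₀, c₀] ![a₁, b₁, c₁]).ncard
      = Int.gcd (b₀*c₁ - b₁*c₀) (Int.gcd (c₀*a₁ - c₁*a₀) (a₀*b₁ - a₁*b₀)) := by
    apply count_H2 _ _ _ _ _ (by show b₀*c₁ - b₁*c₀ = b₀*c₁ - c₀*b₁; ring)
      (by show c₀*a₁ - c₁*a₀ = c₀*a₁ - a₀*c₁; ring)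
      (by show a₀*b₁ - a₁*b₀ = a₀*b₁ - b₀*a₁; ring) hprim0
      (ne_of_lt (show a₀*b₁ - a₁*b₀ < 0 by linarith))
  -- divisibility of the A and B cross products
  have hAg : ((Int.gcd (b₀*c₃ - b₃*c₀) (Int.gcd (c₀*a₃ - c₃*a₀) (a₀*b₃ - a₃*b₀)) : ℕ) : ℤ)
      = a₀ * b₃ - a₃ * b₀ := by rw [← hA]; exact hμA
  have hm1d : (a₀ * b₃ - a₃ * b₀) ∣ (b₀*c₃ - b₃*c₀) := by
    rw [← hAg]; exact (Int.gcd_dvd_left _ _)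
  have hm2d : (a₀ * b₃ - a₃ * b₀) ∣ (c₀*a₃ - c₃*a₀) := by
    rw [← hAg]; exact (Int.gcd_dvd_right _ _).trans (Int.gcd_dvd_left _ _)
  have hBg : ((Int.gcd (b₀*c₁ - b₁*c₀) (Int.gcd (c₀*a₁ - c₁*a₀) (a₀*b₁ - a₁*b₀)) : ℕ) : ℤ)
      = a₁ * b₀ - a₀ * b₁ := by rw [← hB]; exact hμB
  have hp1d : (a₁ * b₀ - a₀ * b₁) ∣ (b₀*c₁ - b₁*c₀) := by
    rw [← hBg]; exact (Int.gcd_dvd_left _ _)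
  have hp2d : (a₁ * b₀ - a₀ * b₁) ∣ (c₀*a₁ - c₁*a₀) := by
    rw [← hBg]; exact (Int.gcd_dvd_right _ _).trans (Int.gcd_dvd_left _ _)
  obtain ⟨m1', hm1'⟩ := hm1d
  obtain ⟨m2', hm2'⟩ := hm2d
  obtain ⟨p1', hp1'⟩ := hp1d
  obtain ⟨p2', hp2'⟩ := hp2d
  -- determinant
  have hDt := hdet.trans hcard
  rw [Matrix.det_fin_three] at hDt
  simp at hDt
  have hD : a₀*(b₁*c₃ - b₃*c₁) + b₀*(c₁*a₃ - c₃*a₁) + c₀*(a₁*b₃ - a₃*b₁)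
      = (a₀*b₃ - a₃*b₀) * (a₁*b₀ - a₀*b₁) * (fAB : ℤ) := by linear_combination hDt
  -- the six key identities
  have I1 : b₁*c₃ - b₃*c₁ = -((a₀*b₃ - a₃*b₀) * (fAB:ℤ) * b₁) - (a₁*b₃ - a₃*b₁) * p1' := by
    apply mul_left_cancel₀ hμBne
    linear_combination (-b₁) * hD + (-(a₁*b₃ - a₃*b₁)) * hp1'
  have I2 : c₁*a₃ - c₃*a₁ = (a₀*b₃ - a₃*b₀) * (fAB:ℤ) * a₁ - (a₁*b₃ - a₃*b₁) * p2' := by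
    apply mul_left_cancel₀ hμBne
    linear_combination a₁ * hD + (-(a₁*b₃ - a₃*b₁)) * hp2'
  have I3 : p1'*(c₁*a₃ - c₃*a₁) - p2'*(b₁*c₃ - b₃*c₁) = (a₀*b₃ - a₃*b₀) * (fAB:ℤ) * c₁ := by
    apply mul_left_cancel₀ hμBne
    linear_combination c₁ * hD + (-(c₁*a₃ - c₃*a₁)) * hp1' + (b₁*c₃ - b₃*c₁) * hp2'
  have I4 : b₁*c₃ - b₃*c₁ = (a₁*b₃ - a₃*b₁) * m1' + (a₁*b₀ - a₀*b₁) * (fAB:ℤ) * b₃ := by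
    apply mul_left_cancel₀ hμAne
    linear_combination b₃ * hD + (a₁*b₃ - a₃*b₁) * hm1'
  have I5 : c₁*a₃ - c₃*a₁ = (a₁*b₃ - a₃*b₁) * m2' - (a₁*b₀ - a₀*b₁) * (fAB:ℤ) * a₃ := by
    apply mul_left_cancel₀ hμAne
    linear_combination (-a₃) * hD + (a₁*b₃ - a₃*b₁) * hm2'
  have I6 : m1'*(c₁*a₃ - c₃*a₁) - m2'*(b₁*c₃ - b₃*c₁) = (a₁*b₀ - a₀*b₁) * (fAB:ℤ) * c₃ := by
    apply mul_left_cancel₀ hμAne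
    linear_combination c₃ * hD + (-(c₁*a₃ - c₃*a₁)) * hm1' + (b₁*c₃ - b₃*c₁) * hm2'
  -- G and its divisibilities
  set G : ℕ := Int.gcd (b₁*c₃ - b₃*c₁) (Int.gcd (c₁*a₃ - c₃*a₁) (a₁*b₃ - a₃*b₁)) with hGdef
  have gd1 : (G:ℤ) ∣ b₁*c₃ - b₃*c₁ := by rw [hGdef]; exact (Int.gcd_dvd_left _ _)
  have gd23 : (G:ℤ) ∣ ((Int.gcd (c₁*a₃ - c₃*a₁) (a₁*b₃ - a₃*b₁) : ℕ) : ℤ) := by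
    rw [hGdef]; exact (Int.gcd_dvd_right _ _)
  have gd2 : (G:ℤ) ∣ c₁*a₃ - c₃*a₁ := gd23.trans (Int.gcd_dvd_left _ _)
  have gd3 : (G:ℤ) ∣ a₁*b₃ - a₃*b₁ := gd23.trans (Int.gcd_dvd_right _ _)
  have ha1 : (G:ℤ) ∣ ((a₀*b₃ - a₃*b₀) * (fAB:ℤ)) * a₁ := by
    have e : ((a₀*b₃ - a₃*b₀) * (fAB:ℤ)) * a₁ = (c₁*a₃ - c₃*a₁) + (a₁*b₃ - a₃*b₁)*p2' := by
      linear_combination -I2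
    rw [e]; exact dvd_add gd2 (gd3.mul_right _)
  have hb1 : (G:ℤ) ∣ ((a₀*b₃ - a₃*b₀) * (fAB:ℤ)) * b₁ := by
    have e : ((a₀*b₃ - a₃*b₀) * (fAB:ℤ)) * b₁ = -(b₁*c₃ - b₃*c₁) - (a₁*b₃ - a₃*b₁)*p1' := by
      linear_combination I1
    rw [e]; exact dvd_sub (dvd_neg.mpr gd1) (gd3.mul_right _)
  have hc1 : (G:ℤ) ∣ ((a₀*b₃ - a₃*b₀) * (fAB:ℤ)) * c₁ := by
    have e : ((a₀*b₃ - a₃*b₀) * (fAB:ℤ)) * c₁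
        = p1'*(c₁*a₃ - c₃*a₁) - p2'*(b₁*c₃ - b₃*c₁) := by linear_combination -I3
    rw [e]; exact dvd_sub (gd2.mul_left _) (gd1.mul_left _)
  have hGA : (G:ℤ) ∣ (a₀*b₃ - a₃*b₀) * (fAB:ℤ) :=
    dvd_of_dvd_three _ _ _ _ _ hprim1 ha1 hb1 hc1
  have ha3 : (G:ℤ) ∣ ((a₁*b₀ - a₀*b₁) * (fAB:ℤ)) * a₃ := by
    have e : ((a₁*b₀ - a₀*b₁) * (fAB:ℤ)) * a₃ = (a₁*b₃ - a₃*b₁)*m2' - (c₁*a₃ - c₃*a₁) := by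
      linear_combination I5
    rw [e]; exact dvd_sub (gd3.mul_right _) gd2
  have hb3 : (G:ℤ) ∣ ((a₁*b₀ - a₀*b₁) * (fAB:ℤ)) * b₃ := by
    have e : ((a₁*b₀ - a₀*b₁) * (fAB:ℤ)) * b₃ = (b₁*c₃ - b₃*c₁) - (a₁*b₃ - a₃*b₁)*m1' := by
      linear_combination -I4
    rw [e]; exact dvd_sub gd1 (gd3.mul_right _)
  have hc3 : (G:ℤ) ∣ ((a₁*b₀ - a₀*b₁) * (fAB:ℤ)) * c₃ := by
    have e : ((a₁*b₀ - a₀*b₁) * (fAB:ℤ)) * c₃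
        = m1'*(c₁*a₃ - c₃*a₁) - m2'*(b₁*c₃ - b₃*c₁) := by linear_combination -I6
    rw [e]; exact dvd_sub (gd2.mul_left _) (gd1.mul_left _)
  have hGB : (G:ℤ) ∣ (a₁*b₀ - a₀*b₁) * (fAB:ℤ) :=
    dvd_of_dvd_three _ _ _ _ _ hprim3 ha3 hb3 hc3
  -- reverse divisibilities
  have gan1 : ∀ q : ℤ, q ∣ (a₀*b₃ - a₃*b₀) * (fAB:ℤ) → q ∣ (a₁*b₃ - a₃*b₁) →
      q ∣ b₁*c₃ - b₃*c₁ ∧ q ∣ c₁*a₃ - c₃*a₁ := by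
    intro q hq1 hq2
    constructor
    · have e : b₁*c₃ - b₃*c₁ = ((a₀*b₃ - a₃*b₀) * (fAB:ℤ))*(-b₁) + (a₁*b₃ - a₃*b₁)*(-p1') := by
        linear_combination I1
      rw [e]; exact dvd_add (hq1.mul_right _) (hq2.mul_right _)
    · have e : c₁*a₃ - c₃*a₁ = ((a₀*b₃ - a₃*b₀) * (fAB:ℤ))*a₁ + (a₁*b₃ - a₃*b₁)*(-p2') := by
        linear_combination I2
      rw [e]; exact dvd_add (hq1.mul_right _) (hq2.mul_right _)
  have gbn1 : ∀ q : ℤ, q ∣ (a₁*b₀ - a₀*b₁) * (fAB:ℤ) → q ∣ (a₁*b₃ - a₃*b₁) →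
      q ∣ b₁*c₃ - b₃*c₁ ∧ q ∣ c₁*a₃ - c₃*a₁ := by
    intro q hq1 hq2
    constructor
    · have e : b₁*c₃ - b₃*c₁ = ((a₁*b₀ - a₀*b₁) * (fAB:ℤ))*b₃ + (a₁*b₃ - a₃*b₁)*m1' := by
        linear_combination I4
      rw [e]; exact dvd_add (hq1.mul_right _) (hq2.mul_right _)
    · have e : c₁*a₃ - c₃*a₁ = ((a₁*b₀ - a₀*b₁) * (fAB:ℤ))*(-a₃) + (a₁*b₃ - a₃*b₁)*m2' := by
        linear_combination I5
      rw [e]; exact dvd_add (hq1.mul_right _) (hq2.mul_right _)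
  -- the three equalities
  have hEqA : G = Int.gcd ((a₀ * b₃ - a₃ * b₀) * (fAB:ℤ)) (a₁ * b₃ - a₃ * b₁) := by
    apply Nat.dvd_antisymm
    · exact_mod_cast Int.dvd_coe_gcd hGA gd3
    · obtain ⟨e1, e2⟩ := gan1 _ (Int.gcd_dvd_left _ _) (Int.gcd_dvd_right _ _)
      exact_mod_cast Int.dvd_coe_gcd e1 (Int.dvd_coe_gcd e2 (Int.gcd_dvd_right _ _))
  have hEqB : G = Int.gcd ((a₁ * b₀ - a₀ * b₁) * (fAB:ℤ)) (a₁ * b₃ - a₃ * b₁) := by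
    apply Nat.dvd_antisymm
    · exact_mod_cast Int.dvd_coe_gcd hGB gd3
    · obtain ⟨e1, e2⟩ := gbn1 _ (Int.gcd_dvd_left _ _) (Int.gcd_dvd_right _ _)
      exact_mod_cast Int.dvd_coe_gcd e1 (Int.dvd_coe_gcd e2 (Int.gcd_dvd_right _ _))
  have hEqT : G = Int.gcd ((a₀ * b₃ - a₃ * b₀) * (fAB:ℤ))
      ((Int.gcd ((a₁ * b₀ - a₀ * b₁) * (fAB:ℤ)) (a₁ * b₃ - a₃ * b₁) : ℕ) : ℤ) := by
    apply Nat.dvd_antisymm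
    · exact_mod_cast Int.dvd_coe_gcd hGA (Int.dvd_coe_gcd hGB gd3)
    · rw [← hEqB]
      have h5 : ((Int.gcd ((a₀ * b₃ - a₃ * b₀) * (fAB:ℤ)) ((G : ℕ) : ℤ) : ℕ) : ℤ)
          ∣ ((G : ℕ) : ℤ) := (Int.gcd_dvd_right _ _)
      exact_mod_cast h5
  refine ⟨?_, ?_, ?_⟩
  · rw [hμ2]; exact hEqT
  · rw [hμ2]; exact hEqA
  · rw [hμ2]; exact hEqB


end
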